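/- For all positive integers i, j, k, the quantity C := 2·ρ_{i+j+k} + ρ_i·ρ_j·ρ_k − ρ_{i+j}·ρ_k − ρ_{i+k}·ρ_j − ρ_{j+k}·ρ_i is strictly positive, where ρ_m := ζ(2m)·(2^{2m} − 2). -/

import Mathlib

open Filter Topology

/-- The Riemann zeta function for real arguments `s > 1`,
defined as `∑_{n=1}^∞ n^{-s}`. -/
noncomputable def zetaR (s : ℝ) : ℝ := ∑' n : ℕ, ((n : ℝ) + 1) ^ (-s)

/-- `ρ_m = ζ(2m)·(2^{2m} − 2)`. -/
noncomputable def rho (m : ℕ) : ℝ := zetaR (2 * m) * ((2 : ℝ) ^ (2 * m) - 2)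

lemma aux_summable (m : ℕ) (hm : 1 ≤ m) :
    Summable (fun n : ℕ => (((n:ℝ)+1)^(2*m))⁻¹) := by
  have h : Summable (fun n : ℕ => (((n:ℝ))^(2*m))⁻¹) :=
    Real.summable_nat_pow_inv.2 (by omega)
  have h2 := (summable_nat_add_iff 1).2 h
  refine h2.congr fun n => ?_
  push_cast
  ring_nf

lemma zetaR_eq (m : ℕ) : zetaR (2*m) = ∑' n : ℕ, (((n:ℝ)+1)^(2*m))⁻¹ := by
  unfold zetaR
  congr 1
  funext n
  have h : (0:ℝ) < (n:ℝ)+1 := by positivity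
  rw [show ((2:ℝ)*m) = ((2*m : ℕ):ℝ) by push_cast; ring, Real.rpow_neg h.le,
    Real.rpow_natCast]

lemma tele_hasSum : HasSum (fun k : ℕ => (1:ℝ)/((k:ℝ)+4) - 1/((k:ℝ)+5)) (1/4) := by
  rw [hasSum_iff_tendsto_nat_of_nonneg]
  · have hsum : ∀ n : ℕ, ∑ i ∈ Finset.range n, ((1:ℝ)/((i:ℝ)+4) - 1/((i:ℝ)+5))
        = 1/4 - 1/((n:ℝ)+4) := by
      intro n
      induction n with
      | zero => simp
      | succ n ih =>
        rw [Finset.sum_range_succ, ih]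
        push_cast
        ring
    simp only [hsum]
    have hb : Tendsto (fun n:ℕ => ((n:ℝ)+4)) atTop atTop :=
      tendsto_atTop_add_const_right _ 4 tendsto_natCast_atTop_atTop
    have : Tendsto (fun n : ℕ => 1/((n:ℝ)+4)) atTop (𝓝 0) := by
      simpa [one_div, Function.comp_def] using tendsto_inv_atTop_zero.comp hb
    have := (tendsto_const_nhds (x := (1:ℝ)/4)).sub this
    simpa using this
  · intro i
    have h1 : (0:ℝ) < (i:ℝ)+4 := by positivity
    have h2 : (0:ℝ) < (i:ℝ)+5 := by positivity
    rw [sub_nonneg, div_le_div_iff₀ h2 h1]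
    linarith

lemma tail_bound (m : ℕ) (hm : 1 ≤ m) :
    ∑' n : ℕ, (((n:ℝ)+5)^(2*m))⁻¹ ≤ ((25:ℝ)^(m-1))⁻¹ * (1/4) := by
  have hb : ∀ n : ℕ, (((n:ℝ)+5)^(2*m))⁻¹
      ≤ ((25:ℝ)^(m-1))⁻¹ * ((1:ℝ)/((n:ℝ)+4) - 1/((n:ℝ)+5)) := by
    intro n
    have h5 : (0:ℝ) < (n:ℝ)+5 := by positivity
    have h4 : (0:ℝ) < (n:ℝ)+4 := by positivity
    have hsplit : (((n:ℝ)+5))^(2*m) = ((n:ℝ)+5)^2 * (((n:ℝ)+5)^2)^(m-1) := by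
      rw [← pow_mul, ← pow_add]
      congr 1
      omega
    have hge : (25:ℝ)^(m-1) ≤ (((n:ℝ)+5)^2)^(m-1) := by
      apply pow_le_pow_left₀ (by norm_num)
      nlinarith
    have hd : (1:ℝ)/((n:ℝ)+4) - 1/((n:ℝ)+5) = (((n:ℝ)+4)*((n:ℝ)+5))⁻¹ := by
      field_simp
      ring
    rw [hd, hsplit, mul_inv, mul_comm (((25:ℝ)^(m-1))⁻¹)]
    apply mul_le_mul
    · rw [inv_le_inv₀ (by positivity) (by positivity)]
      nlinarith
    · rw [inv_le_inv₀ (by positivity) (by positivity)]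
      exact hge
    · positivity
    · positivity
  have hsum : Summable (fun n : ℕ => ((25:ℝ)^(m-1))⁻¹ * ((1:ℝ)/((n:ℝ)+4) - 1/((n:ℝ)+5))) :=
    (tele_hasSum.summable).mul_left _
  calc ∑' n : ℕ, (((n:ℝ)+5)^(2*m))⁻¹
      ≤ ∑' n : ℕ, ((25:ℝ)^(m-1))⁻¹ * ((1:ℝ)/((n:ℝ)+4) - 1/((n:ℝ)+5)) :=
        Summable.tsum_le_tsum hb (by
          apply Summable.of_nonneg_of_le (fun n => by positivity) hb hsum) hsum
    _ = ((25:ℝ)^(m-1))⁻¹ * (1/4) := by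
        rw [tsum_mul_left, tele_hasSum.tsum_eq]

lemma zetaR_le (m : ℕ) (hm : 1 ≤ m) :
    zetaR (2*m) ≤ 1 + ((4:ℝ)^m)⁻¹ + ((9:ℝ)^m)⁻¹ + ((16:ℝ)^m)⁻¹
      + ((25:ℝ)^(m-1))⁻¹ * (1/4) := by
  rw [zetaR_eq]
  have hs := aux_summable m hm
  rw [← Summable.sum_add_tsum_nat_add 4 hs]
  have h1 : ∑ n ∈ Finset.range 4, (((n:ℝ)+1)^(2*m))⁻¹
      = 1 + ((4:ℝ)^m)⁻¹ + ((9:ℝ)^m)⁻¹ + ((16:ℝ)^m)⁻¹ := by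
    rw [Finset.sum_range_succ, Finset.sum_range_succ, Finset.sum_range_succ,
      Finset.sum_range_one]
    norm_num
    rw [pow_mul, pow_mul, pow_mul]
    norm_num
  rw [h1]
  have h2 : ∑' n : ℕ, ((((n+4:ℕ):ℝ)+1)^(2*m))⁻¹ ≤ ((25:ℝ)^(m-1))⁻¹ * (1/4) := by
    refine le_trans (le_of_eq ?_) (tail_bound m hm)
    congr 1
    funext n
    push_cast
    ring_nf
  linarith

lemma zetaR_ge (m : ℕ) (hm : 1 ≤ m) :
    1 + ((4:ℝ)^m)⁻¹ + ((9:ℝ)^m)⁻¹ ≤ zetaR (2*m) := by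
  rw [zetaR_eq]
  have := Summable.sum_le_tsum (Finset.range 3) (fun i _ => by positivity) (aux_summable m hm)
  refine le_trans (le_of_eq ?_) this
  rw [Finset.sum_range_succ, Finset.sum_range_succ, Finset.sum_range_one]
  norm_num
  rw [pow_mul, pow_mul]
  norm_num

lemma zetaR_ge_two : (3:ℝ)/2 ≤ zetaR 2 := by
  have h := zetaR_eq 1
  norm_num at h
  rw [h]
  have hs : Summable (fun n : ℕ => (((n:ℝ)+1)^2)⁻¹) := by
    have := aux_summable 1 le_rfl
    norm_num at this
    exact this
  have hle := Summable.sum_le_tsum (Finset.range 7) (fun i _ => by positivity) hs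
  refine le_trans ?_ hle
  norm_num [Finset.sum_range_succ]

lemma h2pow (m : ℕ) : (2:ℝ)^(2*m) = 4^m := by rw [pow_mul]; norm_num

lemma pow16 (m : ℕ) (hm : 2 ≤ m) : 2*(9:ℝ)^m + 2*(4:ℝ)^m ≤ 16^m := by
  induction m, hm using Nat.le_induction with
  | base => norm_num
  | succ n hn ih =>
    rw [pow_succ, pow_succ, pow_succ]
    have h1 : (0:ℝ) ≤ 4^n := by positivity
    have h2 : (0:ℝ) ≤ 16^n := by positivity
    linarith

lemma rho_one_eq : rho 1 = zetaR 2 * 2 := by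
  unfold rho; norm_num

lemma rho_lower (m : ℕ) (hm : 1 ≤ m) : (4:ℝ)^m - 1 ≤ rho m := by
  rcases eq_or_lt_of_le hm with h | h
  · rw [← h, rho_one_eq]
    norm_num
    linarith [zetaR_ge_two]
  · have hm2 : 2 ≤ m := h
    have hz := zetaR_ge m hm
    have hA : (16:ℝ) ≤ 4^m := by
      calc (16:ℝ) = 4^2 := by norm_num
        _ ≤ 4^m := pow_le_pow_right₀ (by norm_num) hm2
    have hApos : (0:ℝ) < 4^m := by positivity
    have hBpos : (0:ℝ) < (9:ℝ)^m := by positivity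
    have h16 : 2*(9:ℝ)^m + 2*(4:ℝ)^m ≤ 4^m * 4^m := by
      have := pow16 m hm2
      rw [show (16:ℝ)=4*4 by norm_num, mul_pow] at this
      linarith
    unfold rho
    rw [h2pow]
    nlinarith [mul_le_mul_of_nonneg_right hz (show (0:ℝ) ≤ 4^m - 2 by linarith),
      mul_inv_cancel₀ (ne_of_gt hApos), mul_inv_cancel₀ (ne_of_gt hBpos),
      mul_le_mul_of_nonneg_right h16
        (show (0:ℝ) ≤ ((4:ℝ)^m)⁻¹*((9:ℝ)^m)⁻¹ by positivity),
      inv_pos.2 hApos, inv_pos.2 hBpos]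

lemma rho_upper (m : ℕ) (hm : 1 ≤ m) : rho m ≤ (4:ℝ)^m - 1/2 := by
  have hz := zetaR_le m hm
  rcases eq_or_lt_of_le hm with h | h
  · rw [← h] at hz ⊢
    rw [rho_one_eq]
    norm_num at hz ⊢
    linarith
  · have hm2 : 2 ≤ m := h
    obtain ⟨t, rfl⟩ : ∃ t, m = t + 1 := ⟨m - 1, by omega⟩
    simp only [Nat.add_sub_cancel] at hz
    set m := t + 1 with hmdef
    have hA : (16:ℝ) ≤ 4^m := by
      calc (16:ℝ) = 4^2 := by norm_num
        _ ≤ 4^m := pow_le_pow_right₀ (by norm_num) hm2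
    have hApos : (0:ℝ) < (4:ℝ)^m := by positivity
    have hBpos : (0:ℝ) < (9:ℝ)^m := by positivity
    have hCpos : (0:ℝ) < (16:ℝ)^m := by positivity
    have hDpos : (0:ℝ) < (25:ℝ)^t := by positivity
    have hAB : (4:ℝ)^m * ((9:ℝ)^m)⁻¹ ≤ 16/81 := by
      have e : (4:ℝ)^m * ((9:ℝ)^m)⁻¹ = (4/9)^m := by
        rw [div_pow, div_eq_mul_inv]
      rw [e]
      calc ((4:ℝ)/9)^m ≤ (4/9)^2 :=
            pow_le_pow_of_le_one (by norm_num) (by norm_num) hm2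
        _ = 16/81 := by norm_num
    have hAC : (4:ℝ)^m * ((16:ℝ)^m)⁻¹ ≤ 1/16 := by
      have e : (4:ℝ)^m * ((16:ℝ)^m)⁻¹ = (4/16)^m := by
        rw [div_pow, div_eq_mul_inv]
      rw [e]
      calc ((4:ℝ)/16)^m ≤ (4/16)^2 :=
            pow_le_pow_of_le_one (by norm_num) (by norm_num) hm2
        _ = 1/16 := by norm_num
    have hAD : (4:ℝ)^m * ((25:ℝ)^t)⁻¹ ≤ 16/25 := by
      have e : (4:ℝ)^m * ((25:ℝ)^t)⁻¹ = 4 * (4/25)^t := by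
        rw [hmdef, pow_succ, div_pow, div_eq_mul_inv]
        ring
      rw [e]
      have h1 : ((4:ℝ)/25)^t ≤ (4/25)^1 :=
        pow_le_pow_of_le_one (by norm_num) (by norm_num) (by omega)
      have h2 : (0:ℝ) ≤ (4/25:ℝ)^t := by positivity
      nlinarith
    unfold rho
    rw [h2pow]
    nlinarith [mul_le_mul_of_nonneg_right hz (show (0:ℝ) ≤ 4^m - 2 by linarith),
      mul_inv_cancel₀ (ne_of_gt hApos),
      inv_pos.2 hApos, inv_pos.2 hBpos, inv_pos.2 hCpos, inv_pos.2 hDpos]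

lemma key_alg (a b c ea eb ec eab eac ebc eabc : ℝ)
    (ha : 4 ≤ a) (hb : 4 ≤ b) (hc : 4 ≤ c)
    (h1 : 0 ≤ ea) (h2 : ea ≤ 1/2) (h3 : 0 ≤ eb) (h4 : eb ≤ 1/2)
    (h5 : 0 ≤ ec) (h6 : ec ≤ 1/2) (h7 : 0 ≤ eab) (h8 : eab ≤ 1/2)
    (h9 : 0 ≤ eac) (h10 : eac ≤ 1/2) (h11 : 0 ≤ ebc) (h12 : ebc ≤ 1/2)
    (h13 : 0 ≤ eabc) :
    0 < 2*(a*b*c - 1 + eabc) + (a-1+ea)*(b-1+eb)*(c-1+ec)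
      - (a*b-1+eab)*(c-1+ec) - (a*c-1+eac)*(b-1+eb) - (b*c-1+ebc)*(a-1+ea) := by
  nlinarith [mul_nonneg (mul_nonneg h1 h3) (by linarith : (0:ℝ) ≤ c-1),
    mul_nonneg (mul_nonneg h1 h5) (by linarith : (0:ℝ) ≤ b-1),
    mul_nonneg (mul_nonneg h3 h5) (by linarith : (0:ℝ) ≤ a-1),
    mul_nonneg (mul_nonneg h1 h3) h5,
    mul_nonneg (by linarith : (0:ℝ) ≤ 1/2 - ec) (by linarith : (0:ℝ) ≤ a+b-2),
    mul_nonneg (by linarith : (0:ℝ) ≤ 1/2 - eb) (by linarith : (0:ℝ) ≤ a+c-2),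
    mul_nonneg (by linarith : (0:ℝ) ≤ 1/2 - ea) (by linarith : (0:ℝ) ≤ b+c-2),
    mul_nonneg (by linarith : (0:ℝ) ≤ 1/2 - eab) (by linarith : (0:ℝ) ≤ c-1+ec),
    mul_nonneg (by linarith : (0:ℝ) ≤ 1/2 - eac) (by linarith : (0:ℝ) ≤ b-1+eb),
    mul_nonneg (by linarith : (0:ℝ) ≤ 1/2 - ebc) (by linarith : (0:ℝ) ≤ a-1+ea)]

/-- Lemma A.2: for all positive integers `i, j, k`, the quantity
`C = 2ρ_{i+j+k} + ρ_iρ_jρ_k − ρ_{i+j}ρ_k − ρ_{i+k}ρ_j − ρ_{j+k}ρ_i` is positive. -/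
theorem rho_C_pos (i j k : ℕ) (hi : 1 ≤ i) (hj : 1 ≤ j) (hk : 1 ≤ k) :
    0 < 2 * rho (i + j + k) + rho i * rho j * rho k - rho (i + j) * rho k -
        rho (i + k) * rho j - rho (j + k) * rho i := by
  have h4 : ∀ m : ℕ, 1 ≤ m → (4:ℝ) ≤ 4^m := by
    intro m hm
    calc (4:ℝ) = 4^1 := (pow_one 4).symm
      _ ≤ 4^m := pow_le_pow_right₀ (by norm_num) hm
  have H := key_alg ((4:ℝ)^i) ((4:ℝ)^j) ((4:ℝ)^k)
    (rho i - ((4:ℝ)^i - 1)) (rho j - ((4:ℝ)^j - 1)) (rho k - ((4:ℝ)^k - 1))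
    (rho (i+j) - ((4:ℝ)^(i+j) - 1)) (rho (i+k) - ((4:ℝ)^(i+k) - 1))
    (rho (j+k) - ((4:ℝ)^(j+k) - 1)) (rho (i+j+k) - ((4:ℝ)^(i+j+k) - 1))
    (h4 i hi) (h4 j hj) (h4 k hk)
    (by linarith [rho_lower i hi]) (by linarith [rho_upper i hi])
    (by linarith [rho_lower j hj]) (by linarith [rho_upper j hj])
    (by linarith [rho_lower k hk]) (by linarith [rho_upper k hk])
    (by linarith [rho_lower (i+j) (by omega)]) (by linarith [rho_upper (i+j) (by omega)])
    (by linarith [rho_lower (i+k) (by omega)]) (by linarith [rho_upper (i+k) (by omega)])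
    (by linarith [rho_lower (j+k) (by omega)]) (by linarith [rho_upper (j+k) (by omega)])
    (by linarith [rho_lower (i+j+k) (by omega)])
  refine lt_of_lt_of_le H (le_of_eq ?_)
  simp only [pow_add]
  ring
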